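/- For each n ≥ 1, the set E_n ∪ {(x^{q^{2n}} − x)x^i : i ≥ 0} is a k-linear basis of W_n. -/

import Mathlib

set_option linter.unusedSectionVars false
set_option maxHeartbeats 1000000


open Polynomial

variable (k : Type*) [Field k] [Fintype k]

/-- `k[x]₀`: the free non-unital associative `k`-algebra on one generator `x`,
identified with the polynomials over `k` with zero constant term,
viewed as a `k`-submodule of `Polynomial k`. -/
noncomputable def A0 : Submodule k (Polynomial k) :=
  LinearMap.ker (Polynomial.aeval (0 : k)).toLinearMap

/-- A `T`-space of `k[x]₀`: a `k`-linear subspace of `k[x]₀` closed under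
substitutions `f ↦ f ∘ g` for `g ∈ k[x]₀`. -/
def IsTSpace (V : Submodule k (Polynomial k)) : Prop :=
  V ≤ A0 k ∧ ∀ f ∈ V, ∀ g ∈ A0 k, f.comp g ∈ V

/-- `H^S`: the smallest `T`-space of `k[x]₀` containing `H`. -/
noncomputable def TSp (H : Set (Polynomial k)) : Submodule k (Polynomial k) :=
  sInf {V | IsTSpace k V ∧ H ⊆ V}

/-- A `T`-ideal of `k[x]₀`: a `T`-space that is also an ideal of `k[x]₀`. -/
def IsTIdeal (V : Submodule k (Polynomial k)) : Prop :=
  IsTSpace k V ∧ ∀ f ∈ V, ∀ g ∈ A0 k, g * f ∈ V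

/-- `H^T`: the smallest `T`-ideal of `k[x]₀` containing `H`. -/
noncomputable def TId (H : Set (Polynomial k)) : Submodule k (Polynomial k) :=
  sInf {V | IsTIdeal k V ∧ H ⊆ V}

/-- `W_n = {x + x^{q^n}}^S + {x^{q^n+1}}^S`, where `q` is the order of `k`. -/
noncomputable def Wn (n : ℕ) : Submodule k (Polynomial k) :=
  TSp k {X + X ^ (Fintype.card k ^ n)} ⊔ TSp k {X ^ (Fintype.card k ^ n + 1)}

/-- `U_n = {x - x^{q^{2n}}}^T`, where `q` is the order of `k`. -/
noncomputable def Un (n : ℕ) : Submodule k (Polynomial k) :=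
  TId k {X - X ^ (Fintype.card k ^ (2 * n))}

/-- The set `E_n = {x^{q^n i + j} + x^{i + q^n j} : q^n > i > j ≥ 0} ∪
{x^{(q^n+1) i} : 1 ≤ i ≤ q^n - 1}`. -/
def En (n : ℕ) : Set (Polynomial k) :=
  {f | ∃ i j : ℕ, j < i ∧ i < Fintype.card k ^ n ∧
      f = X ^ (i * Fintype.card k ^ n + j) + X ^ (i + j * Fintype.card k ^ n)} ∪
  {f | ∃ i : ℕ, 1 ≤ i ∧ i ≤ Fintype.card k ^ n - 1 ∧
      f = X ^ ((Fintype.card k ^ n + 1) * i)}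

/-! ### Auxiliary lemmas -/

section Aux

lemma mem_A0_iff (f : Polynomial k) : f ∈ A0 k ↔ f.eval 0 = 0 := by
  simp [A0, Polynomial.aeval_def, Polynomial.eval]

lemma X_pow_mem_A0 {i : ℕ} (hi : 1 ≤ i) : (X : Polynomial k) ^ i ∈ A0 k := by
  rw [mem_A0_iff]; simp [zero_pow (by omega : i ≠ 0)]

lemma comp_mem_A0 {f g : Polynomial k} (hf : f ∈ A0 k) (hg : g ∈ A0 k) : f.comp g ∈ A0 k := by
  rw [mem_A0_iff] at *; rw [Polynomial.eval_comp, hg, hf]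

lemma A0_eq_span : A0 k = Submodule.span k {p : Polynomial k | ∃ i : ℕ, p = X ^ (i + 1)} := by
  apply le_antisymm
  · intro g hg
    rw [mem_A0_iff] at hg
    have h0 : g.coeff 0 = 0 := by rw [Polynomial.coeff_zero_eq_eval_zero]; exact hg
    rw [show g = ∑ i ∈ g.support, C (g.coeff i) * X ^ i from g.as_sum_support_C_mul_X_pow]
    apply Submodule.sum_mem
    intro i hi
    have hi0 : i ≠ 0 := by rintro rfl; exact Polynomial.mem_support_iff.mp hi h0
    rw [← Polynomial.smul_eq_C_mul]
    exact Submodule.smul_mem _ _ (Submodule.subset_span ⟨i - 1, by rw [Nat.sub_add_cancel (by omega)]⟩)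
  · rw [Submodule.span_le]
    rintro p ⟨i, rfl⟩
    exact X_pow_mem_A0 k (by omega)

/-- right-composition as a linear map -/
noncomputable def compL (h : Polynomial k) : Polynomial k →ₗ[k] Polynomial k where
  toFun f := f.comp h
  map_add' f g := Polynomial.add_comp
  map_smul' c f := by simp [Polynomial.smul_comp]

lemma comp_mem_TSp (f : Polynomial k) {g : Polynomial k} (hg : g ∈ A0 k) :
    f.comp g ∈ TSp k {f} := by
  rw [TSp, Submodule.mem_sInf]
  rintro V ⟨⟨-, hcomp⟩, hf⟩
  exact hcomp f (hf rfl) g hg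

lemma TSp_le_span_comp {f : Polynomial k} (hf : f ∈ A0 k) :
    TSp k {f} ≤ Submodule.span k {p | ∃ g ∈ A0 k, p = f.comp g} := by
  apply sInf_le
  constructor
  · constructor
    · rw [Submodule.span_le]
      rintro p ⟨g, hg, rfl⟩
      exact comp_mem_A0 k hf hg
    · intro p hp h hh
      have : Submodule.span k {p | ∃ g ∈ A0 k, p = f.comp g} ≤
          (Submodule.span k {p | ∃ g ∈ A0 k, p = f.comp g}).comap (compL k h) := by
        rw [Submodule.span_le]
        rintro p ⟨g, hg, rfl⟩
        exact Submodule.subset_span ⟨g.comp h, comp_mem_A0 k hg hh, Polynomial.comp_assoc f g h⟩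
      exact this hp
  · intro p hp
    rw [Set.mem_singleton_iff] at hp
    subst hp
    exact Submodule.subset_span ⟨X, by rw [mem_A0_iff]; simp, by simp⟩

lemma frob_add (n : ℕ) (f g : Polynomial k) :
    (f + g) ^ (Fintype.card k ^ n) = f ^ (Fintype.card k ^ n) + g ^ (Fintype.card k ^ n) := by
  obtain ⟨d, hp, hcard⟩ := FiniteField.card k (ringChar k)
  haveI : Fact (ringChar k).Prime := ⟨hp⟩
  rw [hcard, ← pow_mul]
  exact add_pow_char_pow f g (ringChar k) (↑d * n)

lemma frob_smul (n : ℕ) (c : k) (f : Polynomial k) :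
    (c • f) ^ (Fintype.card k ^ n) = c • f ^ (Fintype.card k ^ n) := by
  rw [_root_.smul_pow, FiniteField.pow_card_pow]

lemma two_le_m (n : ℕ) (hn : 1 ≤ n) : 2 ≤ Fintype.card k ^ n :=
  le_trans Fintype.one_lt_card (Nat.le_self_pow (by omega) _)

/-- The set `D`, rewritten. -/
def DS (m : ℕ) : Set (Polynomial k) := {f | ∃ i : ℕ, f = X ^ (m * m + i) - X ^ (i + 1)}

lemma DS_eq (n : ℕ) :
    {f : Polynomial k | ∃ i : ℕ, f = (X ^ (Fintype.card k ^ (2 * n)) - X) * X ^ i} =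
      DS k (Fintype.card k ^ n) := by
  have h2 : Fintype.card k ^ (2 * n) = Fintype.card k ^ n * Fintype.card k ^ n := by
    rw [two_mul, pow_add]
  ext f
  constructor
  · rintro ⟨i, rfl⟩
    exact ⟨i, by rw [h2]; ring⟩
  · rintro ⟨i, rfl⟩
    exact ⟨i, by rw [h2]; ring⟩

/-- The basis set. -/
def BS (n : ℕ) : Set (Polynomial k) := En k n ∪ DS k (Fintype.card k ^ n)

end Aux

section Reduction

variable {m : ℕ}

/-- the canonical representative of `a` in `[1, m²-1]` -/
def rho (m a : ℕ) : ℕ := (a - 1) % (m * m - 1) + 1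

lemma rho_fix (hm : 2 ≤ m) {a : ℕ} (h1 : 1 ≤ a) (h2 : a ≤ m * m - 1) : rho m a = a := by
  have : a - 1 < m * m - 1 := by
    have : 4 ≤ m * m := Nat.mul_le_mul hm hm
    omega
  rw [rho, Nat.mod_eq_of_lt this]; omega

lemma rho_congr (hm : 2 ≤ m) {a b : ℕ} (h : a % (m * m - 1) = b % (m * m - 1))
    (ha : 1 ≤ a) (hb : 1 ≤ b) : rho m a = rho m b := by
  rw [rho, rho]
  congr 1
  have h' : a - 1 + 1 ≡ b - 1 + 1 [MOD m * m - 1] := by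
    rw [Nat.sub_add_cancel ha, Nat.sub_add_cancel hb]; exact h
  exact Nat.ModEq.add_right_cancel' 1 h'

lemma rho_spec (hm : 2 ≤ m) {a : ℕ} (ha : 1 ≤ a) :
    1 ≤ rho m a ∧ rho m a ≤ m * m - 1 ∧ rho m a % (m * m - 1) = a % (m * m - 1) := by
  have h4 : 4 ≤ m * m := Nat.mul_le_mul hm hm
  have hM : 1 ≤ m * m - 1 := by omega
  refine ⟨by rw [rho]; omega, ?_, ?_⟩
  · have := Nat.mod_lt (a - 1) (show 0 < m * m - 1 by omega)
    rw [rho]; omega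
  · rw [rho]
    have h' : a - 1 + 1 ≡ a [MOD m * m - 1] := by rw [Nat.sub_add_cancel ha]
    have hmm : (a-1) % (m*m-1) + 1 ≡ (a-1) + 1 [MOD m*m-1] := (Nat.mod_modEq _ _).add_right 1
    calc ((a-1) % (m*m-1) + 1) % (m*m-1) = ((a-1) + 1) % (m*m-1) := hmm
      _ = a % (m*m-1) := h'

lemma red_mem (hm : 2 ≤ m) : ∀ a : ℕ, 1 ≤ a →
    (X : Polynomial k) ^ a - X ^ (rho m a) ∈ Submodule.span k (DS k m) := by
  have h4 : 4 ≤ m * m := Nat.mul_le_mul hm hm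
  intro a
  induction a using Nat.strong_induction_on with
  | _ a ih =>
    intro ha
    by_cases hcase : a ≤ m * m - 1
    · rw [rho_fix hm ha hcase, sub_self]
      exact Submodule.zero_mem _
    · push_neg at hcase
      have hge : m * m ≤ a := by omega
      have step : (X : Polynomial k) ^ a - X ^ (a - (m * m - 1)) ∈ Submodule.span k (DS k m) := by
        apply Submodule.subset_span
        refine ⟨a - m * m, ?_⟩
        have e1 : m * m + (a - m * m) = a := by omega
        have e2 : (a - m * m) + 1 = a - (m * m - 1) := by omega
        rw [e1, e2]
      have hrec := ih (a - (m * m - 1)) (by omega) (by omega)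
      have hrho : rho m (a - (m * m - 1)) = rho m a := by
        apply rho_congr hm _ (by omega) ha
        rw [Nat.mod_eq_sub_mod (by omega : m * m - 1 ≤ a)]
      rw [hrho] at hrec
      have := Submodule.add_mem _ step hrec
      simpa using this

lemma xpow_sub_mem (hm : 2 ≤ m) {a b : ℕ} (ha : 1 ≤ a) (hb : 1 ≤ b)
    (h : a % (m * m - 1) = b % (m * m - 1)) :
    (X : Polynomial k) ^ a - X ^ b ∈ Submodule.span k (DS k m) := by
  have := red_mem k hm a ha
  have h2 := red_mem k hm b hb
  rw [rho_congr hm h ha hb] at this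
  have h3 := Submodule.sub_mem _ this h2
  simpa using h3

end Reduction

section PairDiag

lemma span_DS_le (n : ℕ) :
    Submodule.span k (DS k (Fintype.card k ^ n)) ≤ Submodule.span k (BS k n) :=
  Submodule.span_mono Set.subset_union_right

lemma En_sub (n : ℕ) : En k n ⊆ Submodule.span k (BS k n) :=
  fun _ hf => Submodule.subset_span (Set.mem_union_left _ hf)

lemma digits_aux {m r : ℕ} (hm : 2 ≤ m) (hr1 : 1 ≤ r) (hr2 : r ≤ m * m - 1) :
    r / m * m + r % m = r ∧ r % m < m ∧ r / m < m ∧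
      (1 ≤ r % m * m + r / m) ∧ (r % m * m + r / m ≤ m * m - 1) ∧
      (r % m * m + r / m) % (m * m - 1) = (r * m) % (m * m - 1) := by
  have h4 : 4 ≤ m * m := Nat.mul_le_mul hm hm
  have hdm : r / m * m + r % m = r := Nat.div_add_mod' r m
  have hv : r % m < m := Nat.mod_lt _ (by omega)
  have hu : r / m < m := by
    rw [Nat.div_lt_iff_lt_mul (by omega : 0 < m)]
    omega
  set u := r / m
  set v := r % m
  refine ⟨hdm, hv, hu, ?_, ?_, ?_⟩
  · rcases Nat.eq_zero_or_pos v with h | h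
    · have h0 : 1 ≤ u := by
        rcases Nat.eq_zero_or_pos u with h0 | h0
        · exfalso; rw [h0, h] at hdm; simp at hdm; omega
        · exact h0
      rw [h]; simpa using h0
    · have : 1 * 1 ≤ v * m := Nat.mul_le_mul h (by omega)
      linarith
  · have hvm : (v + 1) * m ≤ m * m := Nat.mul_le_mul_right m (by omega)
    have he : (v + 1) * m = v * m + m := by ring
    exact Nat.le_sub_one_of_lt (by linarith)
  · have h1 : r * m = v * m + u + u * (m * m - 1) := by
      have : u * (m * m) = u + u * (m * m - 1) := by
        have e : m * m - 1 + 1 = m * m := by omega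
        conv_lhs => rw [← e]
        ring
      calc r * m = (u * m + v) * m := by rw [hdm]
        _ = u * (m * m) + v * m := by ring
        _ = v * m + u + u * (m * m - 1) := by rw [this]; ring
    rw [h1, Nat.add_mul_mod_self_right]

lemma pair_mem (n : ℕ) (hn : 1 ≤ n) {a b : ℕ} (ha : 1 ≤ a) (hb : 1 ≤ b)
    (h : b % (Fintype.card k ^ n * Fintype.card k ^ n - 1) =
      a * Fintype.card k ^ n % (Fintype.card k ^ n * Fintype.card k ^ n - 1)) :
    (X : Polynomial k) ^ a + X ^ b ∈ Submodule.span k (BS k n) := by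
  set m := Fintype.card k ^ n with hmdef
  have hm : 2 ≤ m := two_le_m k n hn
  obtain ⟨hr1, hr2, hr3⟩ := rho_spec (m := m) hm ha
  set r := rho m a with hrdef
  obtain ⟨hdm, hv, hu, hvu1, hvu2, hkey⟩ := digits_aux hm hr1 hr2
  set u := r / m
  set v := r % m
  -- residues
  have hkey2 : (v * m + u) % (m * m - 1) = b % (m * m - 1) := by
    rw [hkey, h]
    exact Nat.ModEq.mul_right m hr3
  have h1 : (X : Polynomial k) ^ a - X ^ r ∈ Submodule.span k (DS k m) := red_mem k hm a ha
  have h2 : (X : Polynomial k) ^ b - X ^ (v * m + u) ∈ Submodule.span k (DS k m) :=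
    xpow_sub_mem k hm hb hvu1 hkey2.symm
  have h3 : (X : Polynomial k) ^ r + X ^ (v * m + u) ∈ Submodule.span k (BS k n) := by
    rcases lt_trichotomy u v with hlt | heq | hgt
    · have : (X : Polynomial k) ^ r + X ^ (v * m + u) =
          X ^ (v * m + u) + X ^ (v + u * m) := by
        rw [add_comm]
        congr 2
        rw [← hdm]; ring
      rw [this]
      exact En_sub k n (Set.mem_union_left _ ⟨v, u, hlt, hv, rfl⟩)
    · have hune : 1 ≤ u := by
        rcases Nat.eq_zero_or_pos u with h0 | h0
        · exfalso; rw [← heq, h0] at hvu1; simp at hvu1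
        · exact h0
      have e1 : r = (m + 1) * u := by rw [← hdm, ← heq]; ring
      have e2 : v * m + u = (m + 1) * u := by rw [← heq]; ring
      have : (X : Polynomial k) ^ r + X ^ (v * m + u) = (2 : k) • X ^ ((m + 1) * u) := by
        rw [two_smul, e1, e2]
      rw [this]
      exact Submodule.smul_mem _ _
        (En_sub k n (Set.mem_union_right _ ⟨u, hune, by omega, rfl⟩))
    · have e1 : v * m + u = u + v * m := by ring
      have : (X : Polynomial k) ^ r + X ^ (v * m + u) =
          X ^ (u * m + v) + X ^ (u + v * m) := by
        rw [← hdm, e1]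
      rw [this]
      exact En_sub k n (Set.mem_union_left _ ⟨u, v, hgt, hu, rfl⟩)
  have := Submodule.add_mem _ (Submodule.add_mem _
    (span_DS_le k n h1) (span_DS_le k n h2)) h3
  have e : (X : Polynomial k) ^ a - X ^ r + (X ^ b - X ^ (v * m + u)) +
      (X ^ r + X ^ (v * m + u)) = X ^ a + X ^ b := by ring
  rwa [e] at this

lemma diag_mem (n : ℕ) (hn : 1 ≤ n) {a : ℕ} (ha : 1 ≤ a) :
    (X : Polynomial k) ^ ((Fintype.card k ^ n + 1) * a) ∈ Submodule.span k (BS k n) := by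
  set m := Fintype.card k ^ n with hmdef
  have hm : 2 ≤ m := two_le_m k n hn
  have h4 : 4 ≤ m * m := Nat.mul_le_mul hm hm
  set e := (m + 1) * a with hedef
  have he1 : 1 ≤ e := by
    have : 1 * 1 ≤ (m + 1) * a := Nat.mul_le_mul (by omega) ha
    omega
  have hmul : e * m = e + a * (m * m - 1) := by
    have h1 : a * (m * m) = a * (m * m - 1) + a := by
      have hM : m * m - 1 + 1 = m * m := by omega
      conv_lhs => rw [← hM]
      ring
    calc e * m = a * (m * m) + a * m := by rw [hedef]; ring
      _ = a * (m * m - 1) + a + a * m := by rw [h1]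
      _ = e + a * (m * m - 1) := by rw [hedef]; ring
  obtain ⟨hr1, hr2, hr3⟩ := rho_spec (m := m) hm he1
  set r := rho m e with hrdef
  obtain ⟨hdm, hv, hu, hvu1, hvu2, hkey⟩ := digits_aux hm hr1 hr2
  set u := r / m
  set v := r % m
  -- v*m+u ≡ r*m ≡ e*m ≡ e ≡ r, and both in [1, m*m-1], hence equal
  have hcong : (v * m + u) % (m * m - 1) = r % (m * m - 1) := by
    rw [hkey]
    have h5 : r * m % (m * m - 1) = e * m % (m * m - 1) := Nat.ModEq.mul_right m hr3
    rw [h5, hmul, Nat.add_mul_mod_self_right, hr3]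
  have heq : v * m + u = r := by
    have e1 := rho_fix (m := m) hm hvu1 hvu2
    have e2 := rho_fix (m := m) hm hr1 hr2
    have := rho_congr (m := m) hm hcong hvu1 hr1
    rw [e1, e2] at this
    exact this
  -- hence u = v
  have huv : u = v := by
    have hh : u * m + v = v * m + u := hdm.trans heq.symm
    have hm1 : m - 1 + 1 = m := by omega
    have e1 : u * m = u * (m - 1) + u := by
      conv_lhs => rw [← hm1]
      ring
    have e2 : v * m = v * (m - 1) + v := by
      conv_lhs => rw [← hm1]
      ring
    have e1' : u * ((m-1)+1) = u * (m - 1) + u := by ring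
    have e2' : v * ((m-1)+1) = v * (m - 1) + v := by ring
    have : u * (m - 1) = v * (m - 1) := by
      rw [e1.trans e1', e2.trans e2'] at hh
      linarith
    exact Nat.eq_of_mul_eq_mul_right (by omega) this
  have hune : 1 ≤ u := by
    rcases Nat.eq_zero_or_pos u with h | h
    · exfalso
      have : r = 0 := by rw [← heq, ← huv, h]; simp
      omega
    · exact h
  have h1 : (X : Polynomial k) ^ e - X ^ r ∈ Submodule.span k (DS k m) := red_mem k hm e he1
  have h2 : (X : Polynomial k) ^ r ∈ Submodule.span k (BS k n) := by
    have hexp : r = (m + 1) * u := by rw [← heq, ← huv]; ring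
    rw [hexp]
    exact En_sub k n (Set.mem_union_right _ ⟨u, hune, by omega, rfl⟩)
  have := Submodule.add_mem _ (span_DS_le k n h1) h2
  simpa using this

end PairDiag

section WnLeSpan

variable (n : ℕ)

/-- `g ↦ g + g^{q^n}` as a linear map. -/
noncomputable def Lmap : Polynomial k →ₗ[k] Polynomial k where
  toFun g := g + g ^ (Fintype.card k ^ n)
  map_add' f g := by rw [frob_add]; ring
  map_smul' c f := by simp only [frob_smul, RingHom.id_apply, smul_add]

/-- `g ↦ g * h^{q^n} + h * g^{q^n}` as a linear map in `g`. -/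
noncomputable def Smap (h : Polynomial k) : Polynomial k →ₗ[k] Polynomial k where
  toFun g := g * h ^ (Fintype.card k ^ n) + h * g ^ (Fintype.card k ^ n)
  map_add' f g := by rw [frob_add]; ring
  map_smul' c f := by
    simp only [frob_smul, RingHom.id_apply, smul_add, smul_mul_assoc, mul_smul_comm]

lemma L_mem (hn : 1 ≤ n) {g : Polynomial k} (hg : g ∈ A0 k) :
    g + g ^ (Fintype.card k ^ n) ∈ Submodule.span k (BS k n) := by
  have : A0 k ≤ (Submodule.span k (BS k n)).comap (Lmap k n) := by
    rw [A0_eq_span, Submodule.span_le]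
    rintro p ⟨i, rfl⟩
    have : (Lmap k n) (X ^ (i+1) : Polynomial k) =
        X ^ (i + 1) + X ^ ((i + 1) * Fintype.card k ^ n) := by
      show (X:Polynomial k) ^ (i+1) + ((X:Polynomial k) ^ (i+1)) ^ (Fintype.card k ^ n) = _
      rw [← pow_mul]
    simp only [SetLike.mem_coe, Submodule.mem_comap]
    rw [this]
    exact pair_mem k n hn (by omega)
      (Nat.one_le_iff_ne_zero.2 (by positivity)) rfl
  exact this hg

lemma sym_mem (hn : 1 ≤ n) {g h : Polynomial k} (hg : g ∈ A0 k) (hh : h ∈ A0 k) :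
    g * h ^ (Fintype.card k ^ n) + h * g ^ (Fintype.card k ^ n) ∈
      Submodule.span k (BS k n) := by
  set m := Fintype.card k ^ n with hm
  have hm2 : 2 ≤ m := two_le_m k n hn
  have mono : ∀ a : ℕ, 1 ≤ a → ∀ h' ∈ A0 k,
      (X:Polynomial k) ^ a * h' ^ m + h' * (X ^ a) ^ m ∈ Submodule.span k (BS k n) := by
    intro a ha h' hh'
    have : A0 k ≤ (Submodule.span k (BS k n)).comap (Smap k n (X ^ a)) := by
      rw [A0_eq_span, Submodule.span_le]
      rintro p ⟨b, rfl⟩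
      simp only [SetLike.mem_coe, Submodule.mem_comap]
      have e : (Smap k n (X ^ a)) (X ^ (b+1) : Polynomial k) =
          X ^ ((b + 1) + a * m) + X ^ (a + (b + 1) * m) := by
        show (X:Polynomial k) ^ (b+1) * ((X:Polynomial k) ^ a) ^ m
            + (X:Polynomial k) ^ a * ((X:Polynomial k) ^ (b+1)) ^ m = _
        rw [← pow_mul, ← pow_mul, ← pow_add, ← pow_add]
      rw [e]
      apply pair_mem k n hn (by omega) (by omega)
      -- (a + (b+1)*m) ≡ ((b+1) + a*m) * m  [MOD m*m-1]
      have key : ((b + 1) + a * m) * m = (a + (b + 1) * m) + a * (m * m - 1) := by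
        have h1 : a * (m * m) = a * (m * m - 1) + a := by
          have hM : m * m - 1 + 1 = m * m := by have := Nat.mul_le_mul hm2 hm2; omega
          conv_lhs => rw [← hM]
          ring
        calc ((b + 1) + a * m) * m = a * (m * m) + (b + 1) * m := by ring
          _ = a * (m * m - 1) + a + (b + 1) * m := by rw [h1]
          _ = (a + (b + 1) * m) + a * (m * m - 1) := by ring
      rw [key, Nat.add_mul_mod_self_right]
    have hx : (Smap k n (X ^ a)) h' ∈ Submodule.span k (BS k n) := this hh'
    have e2 : (Smap k n (X ^ a)) h' =
        X ^ a * h' ^ m + h' * (X ^ a) ^ m := by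
      show h' * ((X:Polynomial k) ^ a) ^ m + (X:Polynomial k) ^ a * h' ^ m = _
      ring
    rwa [e2] at hx
  have : A0 k ≤ (Submodule.span k (BS k n)).comap (Smap k n h) := by
    rw [A0_eq_span, Submodule.span_le]
    rintro p ⟨a, rfl⟩
    simp only [SetLike.mem_coe, Submodule.mem_comap]
    have e : (Smap k n h) (X ^ (a+1) : Polynomial k) =
        X ^ (a+1) * h ^ m + h * (X ^ (a+1)) ^ m := rfl
    rw [e]
    exact mono (a+1) (by omega) h hh
  exact this hg

lemma pow_m1_mem (hn : 1 ≤ n) {g : Polynomial k} (hg : g ∈ A0 k) :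
    g ^ (Fintype.card k ^ n + 1) ∈ Submodule.span k (BS k n) := by
  set m := Fintype.card k ^ n with hm
  rw [A0_eq_span] at hg
  induction hg using Submodule.span_induction with
  | mem p hp =>
    obtain ⟨i, rfl⟩ := hp
    rw [← pow_mul]
    have e : (i + 1) * (m + 1) = (m + 1) * (i + 1) := by ring
    rw [e]
    exact diag_mem k n hn (by omega)
  | zero => rw [zero_pow (by omega : m + 1 ≠ 0)]; exact Submodule.zero_mem _
  | add f g hf hg ihf ihg =>
    have hfA : f ∈ A0 k := by rw [A0_eq_span]; exact hf
    have hgA : g ∈ A0 k := by rw [A0_eq_span]; exact hg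
    have e : (f + g) ^ (m + 1) =
        f ^ (m + 1) + g ^ (m + 1) + (f * g ^ m + g * f ^ m) := by
      rw [pow_succ, pow_succ, pow_succ, frob_add]
      ring
    rw [e]
    exact Submodule.add_mem _ (Submodule.add_mem _ ihf ihg) (sym_mem k n hn hfA hgA)
  | smul c f hf ihf =>
    have e : (c • f) ^ (m + 1) = (c ^ (m+1)) • f ^ (m + 1) := by
      rw [_root_.smul_pow]
    rw [e]
    exact Submodule.smul_mem _ _ ihf

lemma Wn_le_span (hn : 1 ≤ n) : Wn k n ≤ Submodule.span k (BS k n) := by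
  set m := Fintype.card k ^ n with hm
  have hXm : (X : Polynomial k) + X ^ m ∈ A0 k := by
    rw [mem_A0_iff]
    simp [zero_pow (by have := two_le_m k n hn; omega : m ≠ 0)]
  have hXm1 : (X : Polynomial k) ^ (m + 1) ∈ A0 k := X_pow_mem_A0 k (by omega)
  rw [Wn]
  apply sup_le
  · refine le_trans (TSp_le_span_comp k hXm) ?_
    rw [Submodule.span_le]
    rintro p ⟨g, hg, rfl⟩
    have e : ((X : Polynomial k) + X ^ m).comp g = g + g ^ m := by
      simp [Polynomial.add_comp, Polynomial.pow_comp]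
    rw [e]
    exact L_mem k n hn hg
  · refine le_trans (TSp_le_span_comp k hXm1) ?_
    rw [Submodule.span_le]
    rintro p ⟨g, hg, rfl⟩
    have e : ((X : Polynomial k) ^ (m+1)).comp g = g ^ (m+1) := by
      simp [Polynomial.pow_comp]
    rw [e]
    exact pow_m1_mem k n hn hg

end WnLeSpan

section SpanLeWn

variable (n : ℕ)

lemma X_pow_comp' (f : Polynomial k) (s : ℕ) :
    ((X : Polynomial k) ^ s).comp f = f ^ s := by
  simp [Polynomial.pow_comp]

lemma G_mem (hn : 1 ≤ n) {a b : ℕ} (ha : 1 ≤ a) (hb : 1 ≤ b) :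
    (X : Polynomial k) ^ (a * Fintype.card k ^ n + b) +
      X ^ (a + b * Fintype.card k ^ n) ∈ Wn k n := by
  set m := Fintype.card k ^ n with hm
  have hXa : (X : Polynomial k) ^ a ∈ A0 k := X_pow_mem_A0 k ha
  have hXb : (X : Polynomial k) ^ b ∈ A0 k := X_pow_mem_A0 k hb
  have hg : (X : Polynomial k) ^ a + X ^ b ∈ A0 k := Submodule.add_mem _ hXa hXb
  have c1 : ((X : Polynomial k) ^ (m+1)).comp (X ^ a + X ^ b) ∈ Wn k n :=
    le_sup_right (α := Submodule k (Polynomial k)) (comp_mem_TSp k _ hg)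
  have c2 : ((X : Polynomial k) ^ (m+1)).comp (X ^ a) ∈ Wn k n :=
    le_sup_right (α := Submodule k (Polynomial k)) (comp_mem_TSp k _ hXa)
  have c3 : ((X : Polynomial k) ^ (m+1)).comp (X ^ b) ∈ Wn k n :=
    le_sup_right (α := Submodule k (Polynomial k)) (comp_mem_TSp k _ hXb)
  have key : (X : Polynomial k) ^ (a * m + b) + X ^ (a + b * m) =
      ((X : Polynomial k) ^ (m+1)).comp (X ^ a + X ^ b) -
        ((X : Polynomial k) ^ (m+1)).comp (X ^ a) -
        ((X : Polynomial k) ^ (m+1)).comp (X ^ b) := by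
    rw [X_pow_comp', X_pow_comp', X_pow_comp']
    have e1 : ((X : Polynomial k) ^ a + X ^ b) ^ (m+1) =
        ((X : Polynomial k) ^ a + X ^ b) ^ m * ((X : Polynomial k) ^ a + X ^ b) := by
      rw [pow_succ]
    rw [e1, frob_add, ← pow_mul, ← pow_mul]
    ring
  rw [key]
  exact Submodule.sub_mem _ (Submodule.sub_mem _ c1 c2) c3

lemma span_le_Wn (hn : 1 ≤ n) : Submodule.span k (BS k n) ≤ Wn k n := by
  set m := Fintype.card k ^ n with hm
  have hm2 : 2 ≤ m := two_le_m k n hn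
  rw [Submodule.span_le]
  rintro p (hp | hp)
  · -- En
    rcases hp with ⟨i, j, hji, him, rfl⟩ | ⟨i, hi1, hi2, rfl⟩
    · rcases Nat.eq_zero_or_pos j with hj0 | hj0
      · subst hj0
        have hXi : (X : Polynomial k) ^ i ∈ A0 k := X_pow_mem_A0 k (by omega)
        have c : ((X : Polynomial k) + X ^ m).comp (X ^ i) ∈ Wn k n :=
          le_sup_left (α := Submodule k (Polynomial k)) (comp_mem_TSp k _ hXi)
        have e : ((X : Polynomial k) + X ^ m).comp (X ^ i) =
            X ^ (i * m + 0) + X ^ (i + 0 * m) := by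
          simp [Polynomial.add_comp, Polynomial.pow_comp, ← pow_mul]
          ring
        rwa [e] at c
      · exact G_mem k n hn (by omega) hj0
    · -- diagonal
      have hXi : (X : Polynomial k) ^ i ∈ A0 k := X_pow_mem_A0 k hi1
      have c : ((X : Polynomial k) ^ (m+1)).comp (X ^ i) ∈ Wn k n :=
        le_sup_right (α := Submodule k (Polynomial k)) (comp_mem_TSp k _ hXi)
      have e : ((X : Polynomial k) ^ (m+1)).comp (X ^ i) = X ^ ((m+1) * i) := by
        rw [X_pow_comp', ← pow_mul, mul_comm]
      rwa [e] at c
  · -- DS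
    obtain ⟨i, rfl⟩ := hp
    rcases Nat.eq_zero_or_pos i with hi0 | hi0
    · subst hi0
      have hX1 : (X : Polynomial k) ∈ A0 k := by
        simpa using X_pow_mem_A0 k (i := 1) le_rfl
      have hXm : (X : Polynomial k) ^ m ∈ A0 k := X_pow_mem_A0 k (by omega)
      have c1 : ((X : Polynomial k) + X ^ m).comp (X ^ m) ∈ Wn k n :=
        le_sup_left (α := Submodule k (Polynomial k)) (comp_mem_TSp k _ hXm)
      have c2 : ((X : Polynomial k) + X ^ m).comp X ∈ Wn k n :=
        le_sup_left (α := Submodule k (Polynomial k)) (comp_mem_TSp k _ hX1)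
      have e : (X : Polynomial k) ^ (m * m + 0) - X ^ (0 + 1) =
          ((X : Polynomial k) + X ^ m).comp (X ^ m) -
            ((X : Polynomial k) + X ^ m).comp X := by
        simp [Polynomial.add_comp, Polynomial.pow_comp, ← pow_mul]
        ring
      rw [e]
      exact Submodule.sub_mem _ c1 c2
    · have c1 : (X : Polynomial k) ^ (m * m + i) + X ^ (m + i * m) ∈ Wn k n :=
        G_mem k n hn (by omega) hi0
      have hXi1 : (X : Polynomial k) ^ (i + 1) ∈ A0 k := X_pow_mem_A0 k (by omega)
      have c2 : ((X : Polynomial k) + X ^ m).comp (X ^ (i+1)) ∈ Wn k n :=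
        le_sup_left (α := Submodule k (Polynomial k)) (comp_mem_TSp k _ hXi1)
      have e : (X : Polynomial k) ^ (m * m + i) - X ^ (i + 1) =
          ((X : Polynomial k) ^ (m * m + i) + X ^ (m + i * m)) -
            ((X : Polynomial k) + X ^ m).comp (X ^ (i+1)) := by
        simp [Polynomial.add_comp, Polynomial.pow_comp, ← pow_mul]
        ring
      rw [e]
      exact Submodule.sub_mem _ c1 c2

end SpanLeWn

section Indep

lemma li_of_injOn_natDegree (s : Set (Polynomial k)) (h0 : (0 : Polynomial k) ∉ s)
    (hinj : Set.InjOn Polynomial.natDegree s) :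
    LinearIndependent k (fun v : s => (v : Polynomial k)) := by
  rw [linearIndependent_iff]
  intro l hl
  by_contra hne
  have hsupp : l.support.Nonempty := Finsupp.support_nonempty_iff.2 hne
  obtain ⟨t, ht, hmax⟩ := Finset.exists_max_image l.support
    (fun t => (t : Polynomial k).natDegree) hsupp
  have htne : (t : Polynomial k) ≠ 0 := fun h => h0 (h ▸ t.2)
  have hco : (Finsupp.linearCombination k (fun v : s => (v : Polynomial k)) l).coeff
      ((t : Polynomial k).natDegree) = l t * (t : Polynomial k).leadingCoeff := by
    rw [Finsupp.linearCombination_apply, Finsupp.sum]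
    rw [Polynomial.finset_sum_coeff]
    rw [Finset.sum_eq_single t]
    · rw [Polynomial.coeff_smul, Polynomial.coeff_natDegree, smul_eq_mul]
    · intro b hb hbt
      have hdlt : (b : Polynomial k).natDegree < (t : Polynomial k).natDegree := by
        rcases lt_or_eq_of_le (hmax b hb) with h | h
        · exact h
        · exact absurd (Subtype.ext (hinj b.2 t.2 h)) hbt
      rw [Polynomial.coeff_smul, Polynomial.coeff_eq_zero_of_natDegree_lt hdlt, smul_zero]
    · intro h; exact absurd ht h
  rw [hl] at hco
  simp only [Polynomial.coeff_zero] at hco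
  have h1 : l t ≠ 0 := Finsupp.mem_support_iff.1 ht
  have h2 : (t : Polynomial k).leadingCoeff ≠ 0 := Polynomial.leadingCoeff_ne_zero.2 htne
  exact (mul_ne_zero h1 h2) hco.symm

lemma natDegree_pair {a b : ℕ} (h : b < a) :
    ((X : Polynomial k) ^ a + X ^ b).natDegree = a := by
  rw [Polynomial.natDegree_add_eq_left_of_natDegree_lt] <;>
    simp [Polynomial.natDegree_X_pow, h]

lemma natDegree_pair_sub {a b : ℕ} (h : b < a) :
    ((X : Polynomial k) ^ a - X ^ b).natDegree = a := by
  rw [Polynomial.natDegree_sub_eq_left_of_natDegree_lt] <;>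
    simp [Polynomial.natDegree_X_pow, h]

lemma pair_ne_zero {a b : ℕ} (h : b < a) : (X : Polynomial k) ^ a + X ^ b ≠ 0 := by
  intro hc
  have := congrArg (fun p => Polynomial.coeff p a) hc
  simp [Polynomial.coeff_X_pow, Nat.ne_of_lt h, (Nat.ne_of_lt h).symm] at this

lemma pair_sub_ne_zero {a b : ℕ} (h : b < a) : (X : Polynomial k) ^ a - X ^ b ≠ 0 := by
  intro hc
  have := congrArg (fun p => Polynomial.coeff p a) hc
  simp [Polynomial.coeff_X_pow, Nat.ne_of_lt h, (Nat.ne_of_lt h).symm] at this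

section IndepBS

variable (n : ℕ)

local notation "m" => Fintype.card k ^ n

lemma indep_BS (hn : 1 ≤ n) :
    LinearIndependent k (fun v : (BS k n) => (v : Polynomial k)) := by
  have hm2 : 2 ≤ m := two_le_m k n hn
  have h4 : 4 ≤ m * m := Nat.mul_le_mul hm2 hm2
  -- basic degree facts
  have degF : ∀ i j : ℕ, j < i → i < m →
      ((X : Polynomial k) ^ (i * m + j) + X ^ (i + j * m)).natDegree = i * m + j := by
    intro i j hji him
    apply natDegree_pair
    have h1 : j * m + m ≤ i * m := by
      have : (j + 1) * m ≤ i * m := Nat.mul_le_mul_right m (by omega)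
      linarith [this]
    have : (j+1) * m = j * m + m := by ring
    nlinarith
  have degDiag : ∀ i : ℕ, ((X : Polynomial k) ^ ((m + 1) * i)).natDegree = (m+1) * i :=
    fun i => Polynomial.natDegree_X_pow _
  have degD : ∀ i : ℕ, ((X : Polynomial k) ^ (m * m + i) - X ^ (i + 1)).natDegree = m * m + i := by
    intro i
    apply natDegree_pair_sub
    omega
  -- bounds
  have boundF : ∀ i j : ℕ, j < i → i < m → i * m + j < m * m := by
    intro i j hji him
    have : (i + 1) * m ≤ m * m := Nat.mul_le_mul_right m (by omega)
    nlinarith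
  have boundDiag : ∀ i : ℕ, i ≤ m - 1 → (m + 1) * i < m * m := by
    intro i hi
    have : (m + 1) * i ≤ (m + 1) * (m - 1) := Nat.mul_le_mul_left _ hi
    have e : (m - 1 + 1) = m := by omega
    have e2 : (m + 1) * (m - 1) + (m + 1) = (m + 1) * (m - 1 + 1) := by ring
    nlinarith [this, e2, e]
  have digit : ∀ i j i' j' : ℕ, j < m → j' < m → i * m + j = i' * m + j' →
      i = i' ∧ j = j' := by
    intro i j i' j' hj hj' h
    have e : m * i + j = m * i' + j' := by
      rw [mul_comm m i, mul_comm m i']; exact h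
    have d1 := congrArg (· / m) e
    simp only [Nat.mul_add_div (by omega : 0 < m), Nat.div_eq_of_lt hj,
      Nat.div_eq_of_lt hj', Nat.add_zero] at d1
    subst d1
    exact ⟨rfl, Nat.add_left_cancel e⟩
  have degjlt : ∀ i j : ℕ, j < i → i < m → i + j * m < i * m + j := by
    intro i j hji him
    have h1 : (j + 1) * m ≤ i * m := Nat.mul_le_mul_right m (by omega)
    have e : (j + 1) * m = j * m + m := by ring
    omega
  apply li_of_injOn_natDegree
  · rintro ((⟨i, j, hji, him, he⟩ | ⟨i, hi1, hi2, he⟩) | ⟨i, he⟩)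
    · exact pair_ne_zero k (degjlt i j hji him) he.symm
    · exact pow_ne_zero _ Polynomial.X_ne_zero he.symm
    · exact pair_sub_ne_zero k (by omega) he.symm
  · rintro p ((⟨i, j, hji, him, rfl⟩ | ⟨i, hi1, hi2, rfl⟩) | ⟨i, rfl⟩) q
      ((⟨i', j', hji', him', rfl⟩ | ⟨i', hi1', hi2', rfl⟩) | ⟨i', rfl⟩) hdeg
    · rw [degF i j hji him, degF i' j' hji' him'] at hdeg
      obtain ⟨rfl, rfl⟩ := digit i j i' j' (by omega) (by omega) hdeg
      rfl
    · rw [degF i j hji him, degDiag i'] at hdeg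
      have e : (m + 1) * i' = i' * m + i' := by ring
      rw [e] at hdeg
      obtain ⟨rfl, rfl⟩ := digit i j i' i' (by omega) (by omega) hdeg
      omega
    · rw [degF i j hji him, degD i'] at hdeg
      have := boundF i j hji him
      omega
    · rw [degF i' j' hji' him', degDiag i] at hdeg
      have e : (m + 1) * i = i * m + i := by ring
      rw [e] at hdeg
      obtain ⟨rfl, h2⟩ := digit i i i' j' (by omega) (by omega) hdeg
      omega
    · rw [degDiag i, degDiag i'] at hdeg
      have : i = i' := Nat.eq_of_mul_eq_mul_left (by omega) hdeg
      rw [this]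
    · rw [degDiag i, degD i'] at hdeg
      have := boundDiag i hi2
      omega
    · rw [degF i' j' hji' him', degD i] at hdeg
      have := boundF i' j' hji' him'
      omega
    · rw [degDiag i', degD i] at hdeg
      have := boundDiag i' hi2'
      omega
    · rw [degD i, degD i'] at hdeg
      have : i = i' := by omega
      rw [this]

end IndepBS

end Indep

/-- For each `n ≥ 1`, the set `E_n ∪ {(x^{q^{2n}} - x) x^i : i ≥ 0}` is a
`k`-linear basis of `W_n`. -/
theorem basis_Wn (n : ℕ) (hn : 1 ≤ n) :
    LinearIndependent k
      (fun v : ↥(En k n ∪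
          {f | ∃ i : ℕ, f = (X ^ (Fintype.card k ^ (2 * n)) - X) * X ^ i}) =>
        (v : Polynomial k)) ∧
    Submodule.span k (En k n ∪
        {f | ∃ i : ℕ, f = (X ^ (Fintype.card k ^ (2 * n)) - X) * X ^ i}) = Wn k n := by
  have hset : En k n ∪ {f : Polynomial k | ∃ i : ℕ,
      f = (X ^ (Fintype.card k ^ (2 * n)) - X) * X ^ i} = BS k n := by
    rw [BS, DS_eq]
  rw [hset]
  exact ⟨indep_BS k n hn,
    le_antisymm (span_le_Wn k n hn) (Wn_le_span k n hn)⟩
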